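/- Let (X_n) be a DDD of a Banach space X, with X_n^* = [X_m]^⊥_{m≠n} ⊂ X^* and Y = closed span of ∪ X_n^*. Then there is a blocking (X[m(i−1)+1, m(i)]) of (X_n) such that the corresponding dual sequence (Y[m(i−1)+1, m(i)]) = ([X_n^*]_{m(i−1)<n≤m(i)}) is a skipped-blocking decomposition of Y. -/

import Mathlib

open Submodule Set Filter Topology

variable {E : Type*} [NormedAddCommGroup E] [NormedSpace ℝ E]

/-- A sequence of subspaces is a DDD: finite-dimensional, total and minimal. -/
def IsDDD (X : ℕ → Submodule ℝ E) : Prop :=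
  (∀ n, FiniteDimensional ℝ (X n)) ∧
  (⨆ n, X n).topologicalClosure = ⊤ ∧
  ∀ n, X n ⊓ (⨆ m ∈ {m | m ≠ n}, X m).topologicalClosure = ⊥

/-- `(W i)` is a finite-dimensional decomposition of its closed linear span:
every element of the closed span is the limit of partial sums of a unique
sequence of vectors `w i ∈ W i`. -/
def IsFDDof (W : ℕ → Submodule ℝ E) : Prop :=
  ∀ x ∈ (⨆ i, W i).topologicalClosure, ∃! w : ℕ → E,
    (∀ i, w i ∈ W i) ∧
      Filter.Tendsto (fun N => ∑ i ∈ Finset.range N, w i) Filter.atTop (nhds x)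

/-- Skipped blocking decomposition: a DDD such that every skipped sequence of
blocks is an FDD of its closed linear span. -/
def IsSBD (X : ℕ → Submodule ℝ E) : Prop :=
  IsDDD X ∧ ∀ n m : ℕ → ℕ, (∀ i, n i ≤ m i) → (∀ i, m i + 1 < n (i + 1)) →
    IsFDDof (fun i => ⨆ j ∈ Set.Icc (n i) (m i), X j)

/-- Minimal f.d. sequence which is a skipped blocking decomposition of its closed span. -/
def IsSBDofSpan (W : ℕ → Submodule ℝ E) : Prop :=
  (∀ n, FiniteDimensional ℝ (W n)) ∧
  (∀ n, W n ⊓ (⨆ m ∈ {m | m ≠ n}, W m).topologicalClosure = ⊥) ∧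
  ∀ n m : ℕ → ℕ, (∀ i, n i ≤ m i) → (∀ i, m i + 1 < n (i + 1)) →
    IsFDDof (fun i => ⨆ j ∈ Set.Icc (n i) (m i), W j)

/-- Norm of the skipped projection `R_{m,k}` onto `X[0,m)` with kernel the closed
span of the tail `X[k+1,∞)` (the spaces `X_m, …, X_k` are skipped). -/
noncomputable def skippedNorm (X : ℕ → Submodule ℝ E) (m k : ℕ) : ℝ :=
  sInf {C : ℝ | 0 ≤ C ∧ ∀ a ∈ (⨆ i ∈ Set.Iio m, X i),
    ∀ b ∈ (⨆ i ∈ Set.Ici (k + 1), X i).topologicalClosure, ‖a‖ ≤ C * ‖a + b‖}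

/-- Annihilator of a subspace in the continuous dual. -/
noncomputable def ann {F : Type*} [NormedAddCommGroup F] [NormedSpace ℝ F] (S : Submodule ℝ F) :
    Submodule ℝ (F →L[ℝ] ℝ) where
  carrier := {f | ∀ x ∈ S, f x = 0}
  add_mem' := by intro f g hf hg x hx; simp [hf x hx, hg x hx]
  zero_mem' := by intro x hx; simp
  smul_mem' := by intro c f hf x hx; simp [hf x hx]

/-- The predecomposition space `Y = [X_n^*]` of a DDD, where
`X_n^* = [X_m]^⊥_{m ≠ n}`. -/
noncomputable def predecomp (X : ℕ → Submodule ℝ E) : Submodule ℝ (E →L[ℝ] ℝ) :=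
  (⨆ n, ann ((⨆ m ∈ {m | m ≠ n}, X m).topologicalClosure)).topologicalClosure

/-- A sequence of subspaces is boundedly complete: boundedness of the partial sums
of a sequence of vectors from the subspaces implies norm convergence. -/
def IsBddCompl (W : ℕ → Submodule ℝ E) : Prop :=
  ∀ v : ℕ → E, (∀ i, v i ∈ W i) →
    BddAbove (Set.range fun N => ‖∑ i ∈ Finset.range N, v i‖) →
    ∃ s : E, Filter.Tendsto (fun N => ∑ i ∈ Finset.range N, v i) Filter.atTop (nhds s)

/-- A Schauder basis of `E`. -/
def IsSchauderBasis (e : ℕ → E) : Prop :=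
  ∀ x : E, ∃! a : ℕ → ℝ,
    Filter.Tendsto (fun N => ∑ i ∈ Finset.range N, a i • e i) Filter.atTop (nhds x)


/-! ### Auxiliary lemmas for `stmt5` -/

section Stmt5Aux

lemma stmt5_mem_ann {S : Submodule ℝ E} {f : E →L[ℝ] ℝ} : f ∈ ann S ↔ ∀ x ∈ S, f x = 0 := Iff.rfl

lemma stmt5_ann_antitone {S T : Submodule ℝ E} (h : S ≤ T) : ann T ≤ ann S :=
  fun f hf x hx => hf x (h hx)

lemma stmt5_isClosed_ann (S : Submodule ℝ E) :
    IsClosed ((ann S : Submodule ℝ (E →L[ℝ] ℝ)) : Set (E →L[ℝ] ℝ)) := by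
  have : ((ann S : Submodule ℝ (E →L[ℝ] ℝ)) : Set (E →L[ℝ] ℝ)) =
      ⋂ x ∈ (S : Set E), {f : E →L[ℝ] ℝ | f x = 0} := by
    ext f; simp [stmt5_mem_ann, Set.mem_iInter]
  rw [this]
  exact isClosed_biInter fun x _ =>
    isClosed_eq ((ContinuousLinearMap.apply ℝ ℝ x).continuous) continuous_const

theorem stmt5_mem_biSup_sum (X : ℕ → Submodule ℝ E) (s : Finset ℕ) (x : E)
    (hx : x ∈ ⨆ j ∈ s, X j) :
    ∃ c : ℕ → E, (∀ j, c j ∈ X j) ∧ (∀ j ∉ s, c j = 0) ∧ x = ∑ j ∈ s, c j := by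
  classical
  rw [Submodule.mem_iSup_finset_iff_exists_sum] at hx
  obtain ⟨μ, hμ⟩ := hx
  refine ⟨fun j => if h : j ∈ s then (μ j : E) else 0, fun j => ?_, fun j hj => by simp [hj], ?_⟩
  · by_cases h : j ∈ s <;> simp [h, SetLike.coe_mem]
  · rw [← hμ]; exact Finset.sum_congr rfl fun j hj => by simp [hj]

lemma stmt5_exists_mem_spanLt (X : ℕ → Submodule ℝ E) (x : E) (hx : x ∈ ⨆ n, X n) :
    ∃ b, x ∈ ⨆ j ∈ Set.Iio b, X j := by
  have hd : Monotone (fun b => ⨆ j ∈ Set.Iio b, X j) := fun a b hab =>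
    biSup_mono (fun j hj => lt_of_lt_of_le hj hab)
  have h2 : x ∈ ⨆ b, ⨆ j ∈ Set.Iio b, X j :=
    (iSup_le fun n => le_iSup_of_le (n+1) (le_biSup _ (by simp)) :
      (⨆ n, X n) ≤ ⨆ b, ⨆ j ∈ Set.Iio b, X j) hx
  exact (Submodule.mem_iSup_of_directed _ hd.directed_le).mp h2

lemma stmt5_fd_biSup (V : ℕ → Submodule ℝ E) (hV : ∀ n, FiniteDimensional ℝ (V n)) (s : Set ℕ)
    (hs : s.Finite) : FiniteDimensional ℝ ↥(⨆ j ∈ s, V j) := by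
  rw [iSup_subtype']
  have : Finite s := hs
  exact Submodule.finiteDimensional_iSup _

variable (X : ℕ → Submodule ℝ E) (Xstar : ℕ → Submodule ℝ (E →L[ℝ] ℝ))

lemma stmt5_vanish_all (htot : (⨆ n, X n).topologicalClosure = ⊤) (f : E →L[ℝ] ℝ)
    (hf : ∀ n, X n ≤ LinearMap.ker (f : E →ₗ[ℝ] ℝ)) : f = 0 := by
  have h1 : (⨆ n, X n) ≤ LinearMap.ker (f : E →ₗ[ℝ] ℝ) := iSup_le hf
  have h2 : (⨆ n, X n).topologicalClosure ≤ LinearMap.ker (f : E →ₗ[ℝ] ℝ) :=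
    Submodule.topologicalClosure_minimal _ h1 (ContinuousLinearMap.isClosed_ker f)
  rw [htot] at h2
  ext x; simpa using h2 (Submodule.mem_top (x := x))

variable (hXstar : ∀ n, Xstar n = ann ((⨆ m ∈ {m | m ≠ n}, X m).topologicalClosure))

include hXstar in
lemma stmt5_Xstar_le_ann {j k : ℕ} (hjk : k ≠ j) : Xstar j ≤ ann (X k) := by
  rw [hXstar j]
  exact stmt5_ann_antitone (le_trans (le_biSup _ (show k ∈ {m | m ≠ j} from hjk))
    (Submodule.le_topologicalClosure _))

include hXstar in
lemma stmt5_sup_le_ann (s : Set ℕ) (k : ℕ) (hk : k ∉ s) : (⨆ j ∈ s, Xstar j) ≤ ann (X k) :=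
  iSup₂_le fun j hj => stmt5_Xstar_le_ann X Xstar hXstar (fun h : k = j => hk (h ▸ hj))

include hXstar in
lemma stmt5_closure_sup_le_ann (s : Set ℕ) (k : ℕ) (hk : k ∉ s) :
    (⨆ j ∈ s, Xstar j).topologicalClosure ≤ ann (X k) :=
  Submodule.topologicalClosure_minimal _ (stmt5_sup_le_ann X Xstar hXstar s k hk)
    (stmt5_isClosed_ann _)

include hXstar in
lemma stmt5_apply_eq_zero_of_disjoint (s u : Set ℕ) (hsu : ∀ k ∈ u, k ∉ s) (f : E →L[ℝ] ℝ)
    (hf : f ∈ ⨆ j ∈ s, Xstar j) (x : E) (hx : x ∈ ⨆ k ∈ u, X k) : f x = 0 := by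
  have hker : (⨆ k ∈ u, X k) ≤ LinearMap.ker (f : E →ₗ[ℝ] ℝ) := by
    refine iSup₂_le fun k hk => fun y hy => ?_
    simpa using (stmt5_sup_le_ann X Xstar hXstar s k (hsu k hk)) hf y hy
  simpa using hker hx

include hXstar in
lemma stmt5_zero_of_disjoint (htot : (⨆ n, X n).topologicalClosure = ⊤) (s t : Set ℕ)
    (hst : ∀ k, k ∈ s → k ∉ t) (f : E →L[ℝ] ℝ)
    (hf1 : f ∈ ⨆ j ∈ s, Xstar j) (hf2 : f ∈ (⨆ j ∈ t, Xstar j).topologicalClosure) : f = 0 := by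
  refine stmt5_vanish_all X htot f (fun k => fun x hx => ?_)
  by_cases hks : k ∈ s
  · simpa using (stmt5_closure_sup_le_ann X Xstar hXstar t k (hst k hks)) hf2 x hx
  · simpa using (stmt5_sup_le_ann X Xstar hXstar s k hks) hf1 x hx

include hXstar in
lemma stmt5_Xstar_fd (hfd : ∀ n, FiniteDimensional ℝ (X n))
    (htot : (⨆ n, X n).topologicalClosure = ⊤) (n : ℕ) :
    FiniteDimensional ℝ (Xstar n) := by
  haveI := hfd n
  let φ : Xstar n →ₗ[ℝ] (X n →L[ℝ] ℝ) :=
    { toFun := fun f => (f : E →L[ℝ] ℝ).comp (X n).subtypeL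
      map_add' := fun f g => by ext x; simp
      map_smul' := fun c f => by ext x; simp }
  refine FiniteDimensional.of_injective φ ?_
  intro f g hfg
  have hsub : ((f : E →L[ℝ] ℝ) - g) = 0 := by
    refine stmt5_vanish_all X htot _ (fun m => fun x hx => ?_)
    rcases eq_or_ne m n with rfl | hmn
    · have heq : (f : E →L[ℝ] ℝ) x = (g : E →L[ℝ] ℝ) x := by
        have := congrArg (fun ψ : (X m →L[ℝ] ℝ) => ψ ⟨x, hx⟩) hfg
        simpa [φ] using this
      simp only [LinearMap.mem_ker]
      simp [ContinuousLinearMap.sub_apply, heq]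
    · have hf0 : (f : E →L[ℝ] ℝ) x = 0 :=
        stmt5_Xstar_le_ann X Xstar hXstar hmn f.2 x hx
      have hg0 : (g : E →L[ℝ] ℝ) x = 0 :=
        stmt5_Xstar_le_ann X Xstar hXstar hmn g.2 x hx
      simp only [LinearMap.mem_ker]
      simp [ContinuousLinearMap.sub_apply, hf0, hg0]
  have : (f : E →L[ℝ] ℝ) = g := by
    have := sub_eq_zero.mp hsub; exact this
  exact Subtype.ext this

lemma stmt5_almost_attain (htot : (⨆ n, X n).topologicalClosure = ⊤) (y : E →L[ℝ] ℝ)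
    (hy : ‖y‖ = 1) : ∃ b : ℕ, ∃ x : E, x ∈ ⨆ j ∈ Set.Iio b, X j ∧ ‖x‖ ≤ 1 ∧ 3/4 < ‖y x‖ := by
  have hx : ∃ x : E, 7/8 * ‖x‖ < ‖y x‖ := by
    by_contra h
    push_neg at h
    have : ‖y‖ ≤ 7/8 := ContinuousLinearMap.opNorm_le_bound y (by norm_num) h
    rw [hy] at this; norm_num at this
  obtain ⟨x, hx⟩ := hx
  have hxne : x ≠ 0 := by
    rintro rfl; simp at hx
  set x0 : E := ‖x‖⁻¹ • x with hx0def
  have hnx : (0:ℝ) < ‖x‖ := norm_pos_iff.mpr hxne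
  have hx0norm : ‖x0‖ = 1 := by
    rw [hx0def, norm_smul]; simp [abs_of_pos (inv_pos.mpr hnx)]
    field_simp
  have hyx0 : 7/8 < ‖y x0‖ := by
    rw [hx0def]
    have : y (‖x‖⁻¹ • x) = ‖x‖⁻¹ • y x := map_smul y _ x
    rw [this, norm_smul]
    simp only [norm_inv, Real.norm_eq_abs, abs_of_pos hnx]
    have hx' : 7/8 * ‖x‖ < |y x| := by simpa using hx
    rw [inv_mul_eq_div, lt_div_iff₀ hnx]
    linarith
  have hdense : Dense ((⨆ n, X n : Submodule ℝ E) : Set E) :=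
    Submodule.dense_iff_topologicalClosure_eq_top.mpr htot
  obtain ⟨x1, hx1mem, hx1close⟩ :
      ∃ x1 ∈ ((⨆ n, X n : Submodule ℝ E) : Set E), dist x0 x1 < 1/100 := by
    have := Metric.mem_closure_iff.mp (by rw [hdense.closure_eq]; trivial : x0 ∈ closure _)
    exact this (1/100) (by norm_num)
  obtain ⟨b, hb⟩ := stmt5_exists_mem_spanLt X x1 hx1mem
  have hx1norm : ‖x1‖ ≤ 101/100 := by
    have := norm_sub_norm_le x1 x0
    rw [dist_comm, dist_eq_norm] at hx1close
    have h2 : ‖x1 - x0‖ < 1/100 := hx1close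
    rw [hx0norm] at this
    linarith
  have hyx1 : 7/8 - 1/100 < ‖y x1‖ := by
    have h1 : ‖y x0 - y x1‖ ≤ ‖x0 - x1‖ := by
      rw [← map_sub]
      calc ‖y (x0 - x1)‖ ≤ ‖y‖ * ‖x0 - x1‖ := y.le_opNorm _
        _ = ‖x0 - x1‖ := by rw [hy, one_mul]
    have h2 : ‖x0 - x1‖ < 1/100 := by rwa [dist_eq_norm] at hx1close
    have := norm_sub_norm_le (y x0) (y x1)
    linarith
  refine ⟨b, (100/101 : ℝ) • x1, Submodule.smul_mem _ _ hb, ?_, ?_⟩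
  · rw [norm_smul]; simp only [Real.norm_eq_abs]
    rw [abs_of_pos (by norm_num : (0:ℝ) < 100/101)]
    have habs : 7/8 - 1/100 < |y x1| := by simpa using hyx1
    nlinarith
  · have : y ((100/101 : ℝ) • x1) = (100/101 : ℝ) • y x1 := map_smul y _ x1
    rw [this, norm_smul]
    simp only [Real.norm_eq_abs]
    rw [abs_of_pos (by norm_num : (0:ℝ) < 100/101)]
    have habs : 7/8 - 1/100 < |y x1| := by simpa using hyx1
    nlinarith

lemma stmt5_exists_next (hfdstar : ∀ n, FiniteDimensional ℝ (Xstar n))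
    (htot : (⨆ n, X n).topologicalClosure = ⊤) (a : ℕ) :
    ∃ b, a < b ∧ ∀ y ∈ ⨆ j ∈ Set.Iio a, Xstar j, ∀ c : ℝ,
      (∀ x ∈ ⨆ j ∈ Set.Iio b, X j, ‖x‖ ≤ 1 → ‖y x‖ ≤ c) → ‖y‖ ≤ 2 * c := by
  classical
  set G := (⨆ j ∈ Set.Iio a, Xstar j) with hGdef
  haveI : FiniteDimensional ℝ G := stmt5_fd_biSup Xstar hfdstar _ (Set.finite_Iio a)
  have h1 : ∀ y : G, ∃ b : ℕ, ∃ x : E, (‖(y : E →L[ℝ] ℝ)‖ = 1 →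
      x ∈ ⨆ j ∈ Set.Iio b, X j ∧ ‖x‖ ≤ 1 ∧ 3/4 < ‖(y : E →L[ℝ] ℝ) x‖) := by
    intro y
    by_cases h : ‖(y : E →L[ℝ] ℝ)‖ = 1
    · obtain ⟨b, x, hx1, hx2, hx3⟩ := stmt5_almost_attain X htot (y : E →L[ℝ] ℝ) h
      exact ⟨b, x, fun _ => ⟨hx1, hx2, hx3⟩⟩
    · exact ⟨0, 0, fun h' => absurd h' h⟩
  choose bb xx hbx using h1
  have hK : IsCompact (Metric.sphere (0 : G) 1) := isCompact_sphere 0 1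
  obtain ⟨t, ht, hcov⟩ := hK.elim_nhds_subcover (fun y => Metric.ball y (1/8))
    (fun y _ => Metric.ball_mem_nhds y (by norm_num))
  refine ⟨max (a+1) (t.sup bb), lt_of_lt_of_le (Nat.lt_succ_self a) (le_max_left _ _), ?_⟩
  intro y hyG c hc
  have hc0 : 0 ≤ c := by
    have := hc 0 (Submodule.zero_mem _) (by simp)
    simpa using this
  by_cases hy0 : y = 0
  · rw [hy0]; simp; linarith
  · have hny : (0:ℝ) < ‖y‖ := norm_pos_iff.mpr hy0
    set y' : E →L[ℝ] ℝ := ‖y‖⁻¹ • y with hy'def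
    have hy'G : y' ∈ G := Submodule.smul_mem _ _ hyG
    have hy'norm : ‖y'‖ = 1 := by
      rw [hy'def]; exact norm_smul_inv_norm hy0
    have hy'sphere : (⟨y', hy'G⟩ : G) ∈ Metric.sphere (0 : G) 1 := by
      exact mem_sphere_zero_iff_norm.mpr hy'norm
    obtain ⟨y0, hy0t, hy0ball⟩ : ∃ y0 ∈ t, (⟨y', hy'G⟩ : G) ∈ Metric.ball y0 (1/8) := by
      have := hcov hy'sphere
      simpa using this
    have hy0K : y0 ∈ Metric.sphere (0 : G) 1 := ht y0 hy0t
    have hy0norm : ‖(y0 : E →L[ℝ] ℝ)‖ = 1 := by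
      have := Metric.mem_sphere.mp hy0K
      replace this := (dist_zero_right y0).symm.trans this
      simpa [Submodule.coe_norm] using this
    obtain ⟨hxmem, hxnorm, hxlb⟩ := hbx y0 hy0norm
    set x := xx y0
    have hxmem' : x ∈ ⨆ j ∈ Set.Iio (max (a+1) (t.sup bb)), X j := by
      have hsub : (⨆ j ∈ Set.Iio (bb y0), X j) ≤ ⨆ j ∈ Set.Iio (max (a+1) (t.sup bb)), X j :=
        biSup_mono (fun j hj => Set.mem_Iio.mpr (lt_of_lt_of_le (Set.mem_Iio.mp hj)
          (le_trans (Finset.le_sup hy0t) (le_max_right _ _))))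
      exact hsub hxmem
    have hdiff : ‖y' - (y0 : E →L[ℝ] ℝ)‖ < 1/8 := by
      have := Metric.mem_ball.mp hy0ball
      replace this := (dist_eq_norm (⟨y', hy'G⟩ : G) y0).symm.trans_lt this
      have h2 : ‖((⟨y', hy'G⟩ : G) - y0 : G)‖ = ‖y' - (y0 : E →L[ℝ] ℝ)‖ := by
        simp [Submodule.coe_norm]
      rwa [h2] at this
    have hy'x : 1/2 < ‖y' x‖ := by
      have h1 : ‖(y0 : E →L[ℝ] ℝ) x - y' x‖ ≤ ‖y' - (y0 : E →L[ℝ] ℝ)‖ * ‖x‖ := by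
        rw [show (y0 : E →L[ℝ] ℝ) x - y' x = -((y' - (y0 : E →L[ℝ] ℝ)) x) by simp]
        rw [norm_neg]
        exact (y' - (y0 : E →L[ℝ] ℝ)).le_opNorm x
      have h2 : ‖y' - (y0 : E →L[ℝ] ℝ)‖ * ‖x‖ ≤ 1/8 := by
        nlinarith [norm_nonneg (y' - (y0 : E →L[ℝ] ℝ)), norm_nonneg x]
      have := norm_sub_norm_le ((y0 : E →L[ℝ] ℝ) x) (y' x)
      linarith
    have hyx : ‖y x‖ ≤ c := hc x hxmem' hxnorm
    have hkey : ‖y' x‖ = ‖y‖⁻¹ * ‖y x‖ := by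
      rw [hy'def]
      have : (‖y‖⁻¹ • y) x = ‖y‖⁻¹ • y x := rfl
      rw [this, norm_smul]
      simp [abs_of_pos (inv_pos.mpr hny)]
    rw [hkey] at hy'x
    rw [inv_mul_eq_div, lt_div_iff₀ hny] at hy'x
    linarith

include hXstar in
lemma stmt5_core_estimate
    (mb : ℕ → ℕ) (hmb : Monotone mb)
    (hP : ∀ k, ∀ y ∈ ⨆ j ∈ Set.Iio (mb k), Xstar j, ∀ c : ℝ,
      (∀ x ∈ ⨆ j ∈ Set.Iio (mb (k+1)), X j, ‖x‖ ≤ 1 → ‖y x‖ ≤ c) → ‖y‖ ≤ 2 * c)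
    (ns ms : ℕ → ℕ) (hnm : ∀ i, ns i ≤ ms i) (hskip : ∀ i, ms i + 1 < ns (i+1))
    (z : ℕ → E →L[ℝ] ℝ)
    (hz : ∀ i, z i ∈ ⨆ j ∈ Set.Icc (ns i) (ms i), ⨆ j' ∈ Set.Ico (mb j) (mb (j+1)), Xstar j')
    (p N : ℕ) (hpN : p ≤ N) :
    ‖∑ i ∈ Finset.range p, z i‖ ≤ 2 * ‖∑ i ∈ Finset.range N, z i‖ := by
  have hms_mono : Monotone ms := monotone_nat_of_le_succ (fun i => by
    have h1 := hskip i; have h2 := hnm (i+1); omega)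
  have hns_mono : Monotone ns := monotone_nat_of_le_succ (fun i => by
    have h1 := hskip i; have h2 := hnm i; omega)
  rcases Nat.eq_zero_or_pos p with rfl | hp
  · simp only [Finset.range_zero, Finset.sum_empty, norm_zero]
    positivity
  obtain ⟨q, rfl⟩ : ∃ q, p = q + 1 := ⟨p - 1, by omega⟩
  set g := ms q + 1 with hgdef
  have hS : (∑ i ∈ Finset.range (q+1), z i) ∈ ⨆ j' ∈ Set.Iio (mb g), Xstar j' := by
    refine Submodule.sum_mem _ (fun i hi => ?_)
    have hi' : i ≤ q := by simpa [Nat.lt_succ_iff] using hi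
    have hle : (⨆ j ∈ Set.Icc (ns i) (ms i), ⨆ j' ∈ Set.Ico (mb j) (mb (j+1)), Xstar j')
        ≤ ⨆ j' ∈ Set.Iio (mb g), Xstar j' := by
      refine iSup₂_le fun j hj => iSup₂_le fun j' hj' => le_biSup _ ?_
      have h1 : j + 1 ≤ g := by
        have := hms_mono hi'
        rcases hj with ⟨-, hj2⟩
        omega
      exact Set.mem_Iio.mpr (lt_of_lt_of_le hj'.2 (hmb h1))
    exact hle (hz i)
  refine hP g _ hS _ (fun x hx hxnorm => ?_)
  have hzero : ∀ i ∈ Finset.Ico (q+1) N, (z i) x = 0 := by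
    intro i hi
    rw [Finset.mem_Ico] at hi
    have hflat : z i ∈ ⨆ j' ∈ Set.Ico (mb (ns i)) (mb (ms i + 1)), Xstar j' := by
      have hle : (⨆ j ∈ Set.Icc (ns i) (ms i), ⨆ j' ∈ Set.Ico (mb j) (mb (j+1)), Xstar j')
          ≤ ⨆ j' ∈ Set.Ico (mb (ns i)) (mb (ms i + 1)), Xstar j' := by
        refine iSup₂_le fun j hj => iSup₂_le fun j' hj' => le_biSup _ ?_
        rcases hj with ⟨hj1, hj2⟩; rcases hj' with ⟨hj'1, hj'2⟩
        exact Set.mem_Ico.mpr ⟨le_trans (hmb hj1) hj'1, lt_of_lt_of_le hj'2 (hmb (by omega))⟩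
      exact hle (hz i)
    refine stmt5_apply_eq_zero_of_disjoint X Xstar hXstar _ (Set.Iio (mb (g+1))) ?_ _ hflat x hx
    intro k hk
    rw [Set.mem_Iio] at hk
    rw [Set.mem_Ico]
    rintro ⟨hk1, -⟩
    have hgi : g + 1 ≤ ns i := by
      have h1 := hskip q
      have h2 := hns_mono (show q + 1 ≤ i from hi.1)
      omega
    exact absurd (lt_of_lt_of_le hk (hmb hgi)) (not_lt.mpr hk1)
  have hagree : (∑ i ∈ Finset.range (q+1), z i) x = (∑ i ∈ Finset.range N, z i) x := by
    rw [← Finset.sum_range_add_sum_Ico _ hpN]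
    simp only [ContinuousLinearMap.add_apply, ContinuousLinearMap.coe_sum',
      Finset.sum_apply]
    rw [Finset.sum_eq_zero hzero]
    ring
  rw [hagree]
  calc ‖(∑ i ∈ Finset.range N, z i) x‖ ≤ ‖∑ i ∈ Finset.range N, z i‖ * ‖x‖ :=
        (∑ i ∈ Finset.range N, z i).le_opNorm x
    _ ≤ ‖∑ i ∈ Finset.range N, z i‖ * 1 :=
        mul_le_mul_of_nonneg_left hxnorm (norm_nonneg _)
    _ = _ := mul_one _

set_option maxHeartbeats 1000000 in
include hXstar in
lemma stmt5_skipped_fdd (htot : (⨆ n, X n).topologicalClosure = ⊤)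
    (hfdstar : ∀ n, FiniteDimensional ℝ (Xstar n))
    (mb : ℕ → ℕ) (hmb : Monotone mb)
    (hP : ∀ k, ∀ y ∈ ⨆ j ∈ Set.Iio (mb k), Xstar j, ∀ c : ℝ,
      (∀ x ∈ ⨆ j ∈ Set.Iio (mb (k+1)), X j, ‖x‖ ≤ 1 → ‖y x‖ ≤ c) → ‖y‖ ≤ 2 * c)
    (ns ms : ℕ → ℕ) (hnm : ∀ i, ns i ≤ ms i) (hskip : ∀ i, ms i + 1 < ns (i+1)) :
    IsFDDof (fun i => ⨆ j ∈ Set.Icc (ns i) (ms i),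
      ((fun i' => ⨆ j' ∈ Set.Ico (mb i') (mb (i'+1)), Xstar j') j)) := by
  classical
  set B : ℕ → Submodule ℝ (E →L[ℝ] ℝ) := fun i => ⨆ j ∈ Set.Icc (ns i) (ms i),
      ((fun i' => ⨆ j' ∈ Set.Ico (mb i') (mb (i'+1)), Xstar j') j) with hBdef
  have hns_mono : Monotone ns := monotone_nat_of_le_succ (fun i => by
    have h1 := hskip i; have h2 := hnm i; omega)
  have hms_mono : Monotone ms := monotone_nat_of_le_succ (fun i => by
    have h1 := hskip i; have h2 := hnm (i+1); omega)
  have hcross : ∀ i j, i < j → ms i + 1 ≤ ns j := fun i j hij => by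
    have h1 := hskip i
    have h2 := hns_mono (show i + 1 ≤ j from hij)
    omega
  have hfdB : ∀ i, FiniteDimensional ℝ (B i) := fun i =>
    stmt5_fd_biSup _ (fun j => stmt5_fd_biSup Xstar hfdstar _ (Set.finite_Ico _ _)) _
      (Set.finite_Icc _ _)
  have hBflat : ∀ i, B i ≤ ⨆ j' ∈ Set.Ico (mb (ns i)) (mb (ms i + 1)), Xstar j' := by
    intro i
    refine iSup₂_le fun j hj => iSup₂_le fun j' hj' => le_biSup _ ?_
    rcases hj with ⟨hj1, hj2⟩; rcases hj' with ⟨hj'1, hj'2⟩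
    exact Set.mem_Ico.mpr ⟨le_trans (hmb hj1) hj'1, lt_of_lt_of_le hj'2 (hmb (by omega))⟩
  have hBother : ∀ i, (⨆ j ∈ {j | j ≠ i}, B j) ≤
      ⨆ j' ∈ (Set.Ico (mb (ns i)) (mb (ms i + 1)))ᶜ, Xstar j' := by
    intro i
    refine iSup₂_le fun j hj => le_trans (hBflat j) (iSup₂_le fun j' hj' => le_biSup _ ?_)
    rcases hj' with ⟨hj'1, hj'2⟩
    intro hmem
    rcases hmem with ⟨hm1, hm2⟩
    rcases lt_or_gt_of_ne (show j ≠ i from hj) with hji | hij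
    · have : ms j + 1 ≤ ns i := hcross j i hji
      exact absurd (lt_of_lt_of_le hj'2 (hmb this)) (not_lt.mpr hm1)
    · have : ms i + 1 ≤ ns j := hcross i j hij
      exact absurd (lt_of_lt_of_le hm2 (hmb this)) (not_lt.mpr hj'1)
  have hBzero : ∀ i, ∀ f ∈ B i, f ∈ (⨆ j ∈ {j | j ≠ i}, B j).topologicalClosure → f = 0 := by
    intro i f hf1 hf2
    refine stmt5_zero_of_disjoint X Xstar hXstar htot (Set.Ico (mb (ns i)) (mb (ms i + 1)))
      (Set.Ico (mb (ns i)) (mb (ms i + 1)))ᶜ (fun k hk => by simpa using hk) f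
      (hBflat i hf1) ?_
    exact Submodule.topologicalClosure_mono (hBother i) hf2
  intro y hy
  have hrep : ∀ v ∈ (⨆ i, B i), ∃ N, ∃ c : ℕ → (E →L[ℝ] ℝ),
      (∀ i, c i ∈ B i) ∧ (∀ i, N ≤ i → c i = 0) ∧ v = ∑ i ∈ Finset.range N, c i := by
    intro v hv
    obtain ⟨b, hb⟩ := stmt5_exists_mem_spanLt B v hv
    have hco : (⨆ j ∈ Set.Iio b, B j) = ⨆ j ∈ (Finset.range b : Finset ℕ), B j := by
      simp [Set.mem_Iio, Finset.mem_range]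
    rw [hco] at hb
    obtain ⟨c, hc1, hc2, hc3⟩ := stmt5_mem_biSup_sum B (Finset.range b) v hb
    exact ⟨b, c, hc1, fun i hi => hc2 i (by simp; omega), by rw [hc3]⟩
  have hcore : ∀ (v : ℕ → (E →L[ℝ] ℝ)), (∀ i, v i ∈ B i) → ∀ (p N : ℕ),
      (∀ i, N ≤ i → v i = 0) →
      ‖∑ i ∈ Finset.range p, v i‖ ≤ 2 * ‖∑ i ∈ Finset.range N, v i‖ := by
    intro v hv p N hvN
    rcases le_or_gt p N with h | h
    · exact stmt5_core_estimate X Xstar hXstar mb hmb hP ns ms hnm hskip v hv p N h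
    · have h1 : ∑ i ∈ Finset.range p, v i = ∑ i ∈ Finset.range N, v i := by
        refine (Finset.sum_subset (Finset.range_subset_range.mpr h.le) ?_).symm
        intro i _ hi
        exact hvN i (by simpa using hi)
      rw [h1]
      linarith [norm_nonneg (∑ i ∈ Finset.range N, v i)]
  have hy' : y ∈ closure ((⨆ i, B i : Submodule ℝ (E →L[ℝ] ℝ)) : Set (E →L[ℝ] ℝ)) := hy
  obtain ⟨u, hu_mem, hu_tend⟩ := mem_closure_iff_seq_limit.mp hy'
  choose Nf z hzB hz0 hzsum using fun k => hrep (u k) (hu_mem k)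
  have hfull : ∀ k (N : ℕ), Nf k ≤ N → ∑ i ∈ Finset.range N, z k i = u k := by
    intro k N h
    rw [hzsum k]
    refine (Finset.sum_subset (Finset.range_subset_range.mpr h) ?_).symm
    intro i _ hi
    exact hz0 k i (by simpa using hi)
  have hdiffest : ∀ k l p, ‖∑ i ∈ Finset.range p, (z k i - z l i)‖ ≤ 2 * ‖u k - u l‖ := by
    intro k l p
    have hv : ∀ i, z k i - z l i ∈ B i := fun i => Submodule.sub_mem _ (hzB k i) (hzB l i)
    have hN : ∀ i, max (Nf k) (Nf l) ≤ i → z k i - z l i = 0 := fun i hi => by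
      rw [hz0 k i (le_trans (le_max_left _ _) hi), hz0 l i (le_trans (le_max_right _ _) hi),
        sub_zero]
    have heq : (∑ i ∈ Finset.range (max (Nf k) (Nf l)), (z k i - z l i)) = u k - u l := by
      rw [Finset.sum_sub_distrib, hfull k _ (le_max_left _ _), hfull l _ (le_max_right _ _)]
    have := hcore _ hv p (max (Nf k) (Nf l)) hN
    rwa [heq] at this
  have hcomp : ∀ i, ∃ wi, Tendsto (fun k => z k i) atTop (nhds wi) := by
    intro i
    have hcs : CauchySeq (fun k => z k i) := by
      rw [Metric.cauchySeq_iff]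
      intro ε hε
      obtain ⟨K, hK⟩ := Metric.cauchySeq_iff.mp hu_tend.cauchySeq (ε/4) (by linarith)
      refine ⟨K, fun k hk l hl => ?_⟩
      have h1 : ‖z k i - z l i‖ ≤ 4 * ‖u k - u l‖ := by
        have e1 : z k i - z l i = (∑ j ∈ Finset.range (i+1), (z k j - z l j))
            - (∑ j ∈ Finset.range i, (z k j - z l j)) := by
          rw [Finset.sum_range_succ]; abel
        rw [e1]
        have := hdiffest k l (i+1)
        have := hdiffest k l i
        calc ‖_ - _‖ ≤ ‖∑ j ∈ Finset.range (i+1), (z k j - z l j)‖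
            + ‖∑ j ∈ Finset.range i, (z k j - z l j)‖ := norm_sub_le _ _
          _ ≤ 4 * ‖u k - u l‖ := by linarith
      have h2 : dist (u k) (u l) < ε/4 := hK k hk l hl
      rw [dist_eq_norm] at h2 ⊢
      calc ‖z k i - z l i‖ ≤ 4 * ‖u k - u l‖ := h1
        _ < ε := by linarith
    exact cauchySeq_tendsto_of_complete hcs
  choose w hw using hcomp
  have hwB : ∀ i, w i ∈ B i := fun i =>
    (Submodule.closed_of_finiteDimensional (B i)).mem_of_tendsto (hw i)
      (Filter.Eventually.of_forall fun k => hzB k i)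
  have htendw : Tendsto (fun N => ∑ i ∈ Finset.range N, w i) atTop (nhds y) := by
    rw [Metric.tendsto_atTop]
    intro ε hε
    obtain ⟨K, hK⟩ := Metric.tendsto_atTop.mp hu_tend (ε/8) (by linarith)
    refine ⟨Nf K, fun N hN => ?_⟩
    have hZK : ∑ i ∈ Finset.range N, z K i = u K := hfull K N hN
    have hlim : Tendsto (fun l => ∑ i ∈ Finset.range N, (z l i - z K i)) atTop
        (nhds (∑ i ∈ Finset.range N, w i - ∑ i ∈ Finset.range N, z K i)) := by
      have : Tendsto (fun l => ∑ i ∈ Finset.range N, z l i) atTop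
          (nhds (∑ i ∈ Finset.range N, w i)) :=
        tendsto_finset_sum _ (fun i _ => hw i)
      have h2 := this.sub (tendsto_const_nhds (x := ∑ i ∈ Finset.range N, z K i))
      simpa [Finset.sum_sub_distrib] using h2
    have hbound : ‖∑ i ∈ Finset.range N, w i - ∑ i ∈ Finset.range N, z K i‖ ≤ ε/2 := by
      refine le_of_tendsto (hlim.norm) ?_
      filter_upwards [Filter.eventually_ge_atTop K] with l hl
      have h1 := hdiffest l K N
      have h2 : dist (u l) y < ε/8 := hK l hl
      have h3 : dist (u K) y < ε/8 := hK K le_rfl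
      have h4 : ‖u l - u K‖ ≤ ε/4 := by
        calc ‖u l - u K‖ = dist (u l) (u K) := (dist_eq_norm _ _).symm
          _ ≤ dist (u l) y + dist y (u K) := dist_triangle _ _ _
          _ ≤ ε/8 + ε/8 := by rw [dist_comm y (u K)]; exact add_le_add h2.le h3.le
          _ = ε/4 := by ring
      calc ‖∑ i ∈ Finset.range N, (z l i - z K i)‖ ≤ 2 * ‖u l - u K‖ := h1
        _ ≤ ε/2 := by linarith
    have h5 : dist (u K) y < ε/8 := hK K le_rfl
    calc dist (∑ i ∈ Finset.range N, w i) y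
        ≤ dist (∑ i ∈ Finset.range N, w i) (u K) + dist (u K) y := dist_triangle _ _ _
      _ < ε/2 + ε/8 + ε/8 := by
          have hd1 : dist (∑ i ∈ Finset.range N, w i) (u K) ≤ ε/2 := by
            rw [dist_eq_norm]
            have he : (∑ i ∈ Finset.range N, w i) - u K
                = ∑ i ∈ Finset.range N, w i - ∑ i ∈ Finset.range N, z K i := by rw [hZK]
            rw [he]
            exact hbound
          linarith
      _ < ε := by linarith
  refine ⟨w, ⟨hwB, htendw⟩, ?_⟩
  rintro w' ⟨hw'B, hw'tend⟩
  have hdtend : Tendsto (fun N => ∑ i ∈ Finset.range N, (w' i - w i)) atTop (nhds 0) := by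
    have h := hw'tend.sub htendw
    rw [sub_self] at h
    have he : (fun N => (∑ i ∈ Finset.range N, w' i) - ∑ i ∈ Finset.range N, w i)
        = fun N => ∑ i ∈ Finset.range N, (w' i - w i) := by
      funext N; rw [Finset.sum_sub_distrib]
    rwa [he] at h
  funext i
  have hdB : w' i - w i ∈ B i := Submodule.sub_mem _ (hw'B i) (hwB i)
  have hdC : w' i - w i ∈ (⨆ j ∈ {j | j ≠ i}, B j).topologicalClosure := by
    have hneg : -(w' i - w i) ∈ (⨆ j ∈ {j | j ≠ i}, B j).topologicalClosure := by
      have hterm : ∀ N, (∑ j ∈ Finset.range (N + i + 1), (w' j - w j)) - (w' i - w i)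
          ∈ (⨆ j ∈ {j | j ≠ i}, B j) := by
        intro N
        have hi_mem : i ∈ Finset.range (N + i + 1) := by simp
        rw [← Finset.sum_erase_eq_sub hi_mem]
        refine Submodule.sum_mem _ (fun j hj => ?_)
        have hji : j ≠ i := Finset.ne_of_mem_erase hj
        have hle : B j ≤ ⨆ j ∈ {j | j ≠ i}, B j := le_biSup _ (show j ∈ {j | j ≠ i} from hji)
        exact hle (Submodule.sub_mem _ (hw'B j) (hwB j))
      have hlim : Tendsto (fun N => (∑ j ∈ Finset.range (N + i + 1), (w' j - w j))
          - (w' i - w i)) atTop (nhds (0 - (w' i - w i))) := by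
        refine Tendsto.sub ?_ tendsto_const_nhds
        exact hdtend.comp (tendsto_add_atTop_nat (i+1))
      rw [zero_sub] at hlim
      exact mem_closure_of_tendsto hlim (Filter.Eventually.of_forall hterm)
    have := Submodule.neg_mem _ hneg
    simpa using this
  have : w' i - w i = 0 := hBzero i _ hdB hdC
  exact sub_eq_zero.mp this

end Stmt5Aux

/-- For any DDD `(X n)` with dual spaces `X_n^* = ann [X_m]_{m≠n}`,
there is a blocking such that the corresponding blocked dual sequence is a
skipped blocking decomposition of the predecomposition space
`Y = [X_n^*]` (its closed linear span). -/
theorem stmt5 [CompleteSpace E] (X : ℕ → Submodule ℝ E) (hX : IsDDD X)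
    (Xstar : ℕ → Submodule ℝ (E →L[ℝ] ℝ))
    (hXstar : ∀ n, Xstar n = ann ((⨆ m ∈ {m | m ≠ n}, X m).topologicalClosure)) :
    ∃ m : ℕ → ℕ, m 0 = 0 ∧ StrictMono m ∧
      IsSBDofSpan (fun i => ⨆ j ∈ Set.Ico (m i) (m (i + 1)), Xstar j) := by
  classical
  obtain ⟨hfd, htot, -⟩ := hX
  have hfdstar : ∀ n, FiniteDimensional ℝ (Xstar n) :=
    stmt5_Xstar_fd X Xstar hXstar hfd htot
  have hnext := stmt5_exists_next X Xstar hfdstar htot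
  choose nb hlt hPP using hnext
  set m : ℕ → ℕ := fun k => Nat.rec 0 (fun _ p => nb p) k with hmdef
  have hmsucc : ∀ k, m (k+1) = nb (m k) := fun k => rfl
  have hmono : StrictMono m := strictMono_nat_of_lt_succ (fun k => by
    rw [hmsucc]; exact hlt (m k))
  have hP : ∀ k, ∀ y ∈ ⨆ j ∈ Set.Iio (m k), Xstar j, ∀ c : ℝ,
      (∀ x ∈ ⨆ j ∈ Set.Iio (m (k+1)), X j, ‖x‖ ≤ 1 → ‖y x‖ ≤ c) → ‖y‖ ≤ 2 * c := by
    intro k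
    have := hPP (m k)
    rwa [← hmsucc k] at this
  refine ⟨m, rfl, hmono, ?_, ?_, ?_⟩
  · intro n
    exact stmt5_fd_biSup Xstar hfdstar _ (Set.finite_Ico _ _)
  · intro n
    rw [eq_bot_iff]
    intro f hf
    obtain ⟨hf1, hf2⟩ := Submodule.mem_inf.mp hf
    have hle : (⨆ m' ∈ {m' | m' ≠ n}, (fun i => ⨆ j ∈ Set.Ico (m i) (m (i+1)), Xstar j) m')
        ≤ ⨆ j ∈ (Set.Ico (m n) (m (n+1)))ᶜ, Xstar j := by
      refine iSup₂_le fun m' hm' => iSup₂_le fun j hj => le_biSup _ ?_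
      rcases hj with ⟨hj1, hj2⟩
      intro hmem
      rcases hmem with ⟨hm1, hm2⟩
      rcases lt_or_gt_of_ne (show m' ≠ n from hm') with h | h
      · have : m (m'+1) ≤ m n := hmono.monotone (show m' + 1 ≤ n by omega)
        omega
      · have : m (n+1) ≤ m m' := hmono.monotone (show n + 1 ≤ m' by omega)
        omega
    have hf2' := Submodule.topologicalClosure_mono hle hf2
    have hzero := stmt5_zero_of_disjoint X Xstar hXstar htot (Set.Ico (m n) (m (n+1)))
      (Set.Ico (m n) (m (n+1)))ᶜ (fun k hk => by simpa using hk) f hf1 hf2'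
    simpa [Submodule.mem_bot] using hzero
  · intro ns ms hnm hskip
    exact stmt5_skipped_fdd X Xstar hXstar htot hfdstar m hmono.monotone hP ns ms hnm hskip
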